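/- Let τ > 0 and let (W(t), M(t)) be a solution of the synaptic ODE with timescale τ and initial condition (W₀, M₀) ∈ D. Let m = σ_min(M₀) denote the smallest eigenvalue of M₀. Then for every t ≥ 0 and every unit vector v ∈ ℝ^k, vᵀM(t)v ≥ m·e^{−t/τ}; consequently the smallest eigenvalue of M(t) satisfies σ_min(M(t)) ≥ m·e^{−t/τ}, and ‖M(t)⁻¹‖ ≤ (√k / m)·e^{t/τ}. -/

import Mathlib

open Matrix Filter
open scoped Matrix

attribute [local instance] Matrix.frobeniusNormedAddCommGroup Matrix.frobeniusNormedSpace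

lemma quadform_ge_inf_eigenvalues {k : ℕ} (hk : 0 < k) {N : Matrix (Fin k) (Fin k) ℝ}
    (hH : N.IsHermitian) (v : Fin k → ℝ) :
    (⨅ i : Fin k, hH.eigenvalues i) * (v ⬝ᵥ v) ≤ v ⬝ᵥ N.mulVec v := by
  haveI : Nonempty (Fin k) := ⟨⟨0, hk⟩⟩
  set U : Matrix (Fin k) (Fin k) ℝ := (hH.eigenvectorUnitary : Matrix (Fin k) (Fin k) ℝ) with hU
  have hUmem := hH.eigenvectorUnitary.2
  have hUstar : U * star U = 1 := (Matrix.mem_unitaryGroup_iff).mp hUmem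
  set w : Fin k → ℝ := star U *ᵥ v with hw
  have hvecMul : vecMul v U = w := by
    rw [hw, ← Matrix.mulVec_transpose]
    congr 1
  have hquad : v ⬝ᵥ N.mulVec v = ∑ i, hH.eigenvalues i * (w i * w i) := by
    conv_lhs => rw [hH.spectral_theorem, Unitary.conjStarAlgAut_apply]
    rw [← Matrix.mulVec_mulVec, ← Matrix.mulVec_mulVec, Matrix.dotProduct_mulVec, hvecMul]
    simp [Matrix.mulVec_diagonal, dotProduct, mul_comm, mul_left_comm]
    rfl
  have hnorm : v ⬝ᵥ v = ∑ i, w i * w i := by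
    have h1 : w ⬝ᵥ w = v ⬝ᵥ v := by
      conv_lhs => rw [hw, Matrix.dotProduct_mulVec]
      have h2 : (star U *ᵥ v) ᵥ* star U = v := by
        have hT : star U = Uᵀ := by
          rw [Matrix.star_eq_conjTranspose, Matrix.conjTranspose_eq_transpose_of_trivial]
        rw [hT, Matrix.vecMul_transpose, Matrix.mulVec_mulVec, ← hT, hUstar, Matrix.one_mulVec]
      rw [h2]
    rw [← h1]
    simp [dotProduct]
  rw [hquad, hnorm, Finset.mul_sum]
  apply Finset.sum_le_sum
  intro i _
  have h1 : (⨅ j : Fin k, hH.eigenvalues j) ≤ hH.eigenvalues i :=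
    ciInf_le (Finite.bddBelow_range _) i
  have h2 : 0 ≤ w i * w i := mul_self_nonneg _
  nlinarith

noncomputable def quadCLM {k : ℕ} (v : Fin k → ℝ) :
    Matrix (Fin k) (Fin k) ℝ →L[ℝ] ℝ :=
  LinearMap.toContinuousLinearMap
    { toFun := fun N => v ⬝ᵥ N *ᵥ v
      map_add' := fun N₁ N₂ => by simp [Matrix.add_mulVec, dotProduct_add]
      map_smul' := fun c N => by simp [Matrix.smul_mulVec, dotProduct_smul] }

@[simp] lemma quadCLM_apply {k : ℕ} (v : Fin k → ℝ) (N : Matrix (Fin k) (Fin k) ℝ) :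
    quadCLM v N = v ⬝ᵥ N *ᵥ v := rfl

lemma hasDerivWithinAt_quadform {k : ℕ} {M : ℝ → Matrix (Fin k) (Fin k) ℝ}
    {M' : Matrix (Fin k) (Fin k) ℝ} {s : Set ℝ} {t : ℝ}
    (h : HasDerivWithinAt M M' s t) (v : Fin k → ℝ) :
    HasDerivWithinAt (fun u => v ⬝ᵥ (M u) *ᵥ v) (v ⬝ᵥ M' *ᵥ v) s t := by
  have := ((quadCLM v).hasFDerivAt (x := M t)).comp_hasDerivWithinAt t h
  exact this

lemma exp_mul_le_of_deriv {τ : ℝ} (hτ : 0 < τ) {f f' : ℝ → ℝ}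
    (hf : ∀ s ∈ Set.Ici (0:ℝ), HasDerivWithinAt f (f' s) (Set.Ici 0) s)
    (hf' : ∀ s ∈ Set.Ici (0:ℝ), 0 ≤ f' s + τ⁻¹ * f s)
    {t : ℝ} (ht : 0 ≤ t) : f 0 ≤ Real.exp (t / τ) * f t := by
  set g : ℝ → ℝ := fun s => Real.exp (s / τ) * f s with hgdef
  have hg : ∀ s ∈ Set.Ici (0:ℝ), HasDerivWithinAt g
      (Real.exp (s / τ) * (1 / τ) * f s + Real.exp (s / τ) * f' s) (Set.Ici 0) s := by
    intro s hs
    exact (((hasDerivAt_id s).div_const τ).exp.hasDerivWithinAt).mul (hf s hs)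
  have mono : MonotoneOn g (Set.Ici 0) := by
    apply monotoneOn_of_deriv_nonneg (convex_Ici 0)
      (fun s hs => (hg s hs).continuousWithinAt)
      (fun s hs => ((hg s (interior_subset hs)).differentiableWithinAt).mono interior_subset)
    intro x hx
    rw [interior_Ici] at hx
    rw [((hg x (Set.mem_Ici.mpr (le_of_lt hx))).hasDerivAt (Ici_mem_nhds hx)).deriv]
    have h1 := (Real.exp_pos (x / τ)).le
    have h2 := hf' x (Set.mem_Ici.mpr (le_of_lt hx))
    have h3 : Real.exp (x / τ) * (1 / τ) * f x + Real.exp (x / τ) * f' x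
        = Real.exp (x / τ) * (f' x + τ⁻¹ * f x) := by
      field_simp
      ring
    rw [h3]
    exact mul_nonneg h1 h2
  have h0 : g 0 ≤ g t := mono (Set.self_mem_Ici) ht ht
  simpa [hgdef] using h0

/-- A solution of the synaptic ODE with timescale `τ` on `[0, ∞)`:
a continuously differentiable curve `t ↦ (W t, M t)` staying in the domain `D`
(i.e. `M t` symmetric positive definite) satisfying
`(1/2)·dW/dt = M⁻¹WA − W` and `τ·dM/dt = M⁻¹WAWᵀM⁻¹ − M`. -/
def IsSynSol {k n : ℕ} (A : Matrix (Fin n) (Fin n) ℝ) (τ : ℝ)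
    (W : ℝ → Matrix (Fin k) (Fin n) ℝ) (M : ℝ → Matrix (Fin k) (Fin k) ℝ) : Prop :=
  ∀ t : ℝ, 0 ≤ t →
    (M t).PosDef ∧
    HasDerivWithinAt W ((2 : ℝ) • ((M t)⁻¹ * W t * A - W t)) (Set.Ici 0) t ∧
    HasDerivWithinAt M (τ⁻¹ • ((M t)⁻¹ * W t * A * (W t)ᵀ * (M t)⁻¹ - M t)) (Set.Ici 0) t

/-- Along any solution with timescale `τ > 0`, with `m = σ_min(M₀)` the smallest
eigenvalue of `M₀`: for every `t ≥ 0` and every unit vector `v`, `vᵀM(t)v ≥ m·e^{−t/τ}`;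
consequently every eigenvalue of `M(t)` is at least `m·e^{−t/τ}`, and
`‖M(t)⁻¹‖ ≤ (√k / m)·e^{t/τ}` (Frobenius norm). -/
theorem M_eigenvalue_lower_bound {k n : ℕ} (hk : 0 < k) (hkn : k < n)
    (A : Matrix (Fin n) (Fin n) ℝ) (hA : A.PosDef)
    (τ : ℝ) (hτ : 0 < τ)
    (W₀ : Matrix (Fin k) (Fin n) ℝ) (M₀ : Matrix (Fin k) (Fin k) ℝ) (hM₀ : M₀.PosDef)
    (W : ℝ → Matrix (Fin k) (Fin n) ℝ) (M : ℝ → Matrix (Fin k) (Fin k) ℝ)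
    (hsol : IsSynSol A τ W M) (hW0 : W 0 = W₀) (hM0 : M 0 = M₀)
    (m : ℝ) (hm : m = ⨅ i : Fin k, hM₀.isHermitian.eigenvalues i) :
    ∀ t : ℝ, 0 ≤ t →
      (∀ v : Fin k → ℝ, v ⬝ᵥ v = 1 →
        m * Real.exp (-t / τ) ≤ v ⬝ᵥ (M t).mulVec v) ∧
      (∀ (hH : (M t).IsHermitian) (i : Fin k),
        m * Real.exp (-t / τ) ≤ hH.eigenvalues i) ∧
      ‖(M t)⁻¹‖ ≤ (Real.sqrt k / m) * Real.exp (t / τ) := by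
  haveI : Nonempty (Fin k) := ⟨⟨0, hk⟩⟩
  -- m is positive
  have hm_pos : 0 < m := by
    obtain ⟨i, hi⟩ := Finite.exists_min (fun i => hM₀.isHermitian.eigenvalues i)
    have heq : m = hM₀.isHermitian.eigenvalues i := by
      rw [hm]
      exact le_antisymm (ciInf_le (Finite.bddBelow_range _) i) (le_ciInf hi)
    rw [heq]
    exact hM₀.eigenvalues_pos i
  -- Part 1 as a standalone claim
  have key : ∀ t : ℝ, 0 ≤ t → ∀ v : Fin k → ℝ, v ⬝ᵥ v = 1 →
      m * Real.exp (-t / τ) ≤ v ⬝ᵥ (M t).mulVec v := by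
    intro t ht v hv
    set f : ℝ → ℝ := fun s => v ⬝ᵥ (M s) *ᵥ v with hfdef
    set q : ℝ → ℝ := fun s => v ⬝ᵥ ((M s)⁻¹ * W s * A * (W s)ᵀ * (M s)⁻¹) *ᵥ v with hqdef
    have hf : ∀ s ∈ Set.Ici (0:ℝ), HasDerivWithinAt f (τ⁻¹ * (q s - f s)) (Set.Ici 0) s := by
      intro s hs
      have h := hasDerivWithinAt_quadform ((hsol s hs).2.2) v
      have heq : v ⬝ᵥ (τ⁻¹ • ((M s)⁻¹ * W s * A * (W s)ᵀ * (M s)⁻¹ - M s)) *ᵥ v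
          = τ⁻¹ * (q s - f s) := by
        simp [Matrix.smul_mulVec, Matrix.sub_mulVec, dotProduct_smul,
          dotProduct_sub, hqdef, hfdef, smul_eq_mul]
      rw [heq] at h
      exact h
    have hq : ∀ s ∈ Set.Ici (0:ℝ), 0 ≤ q s := by
      intro s hs
      obtain ⟨hpd, -, -⟩ := hsol s hs
      have hMt : (M s)ᵀ = M s := by
        have := hpd.isHermitian
        rwa [Matrix.IsHermitian, Matrix.conjTranspose_eq_transpose_of_trivial] at this
      have hMinv : ((M s)⁻¹)ᵀ = (M s)⁻¹ := by
        rw [Matrix.transpose_nonsing_inv, hMt]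
      have hrw : (M s)⁻¹ * W s * A * (W s)ᵀ * (M s)⁻¹
          = ((M s)⁻¹ * W s) * A * ((M s)⁻¹ * W s)ᵀ := by
        rw [Matrix.transpose_mul, hMinv, Matrix.mul_assoc ((M s)⁻¹ * W s * A)]
      set B := (M s)⁻¹ * W s with hB
      have hform : q s = (v ᵥ* B) ⬝ᵥ A *ᵥ (v ᵥ* B) := by
        rw [hqdef]
        show v ⬝ᵥ ((M s)⁻¹ * W s * A * (W s)ᵀ * (M s)⁻¹) *ᵥ v = _
        rw [hrw]
        rw [← Matrix.mulVec_mulVec, ← Matrix.mulVec_mulVec, Matrix.dotProduct_mulVec,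
          Matrix.mulVec_transpose]
      rw [hform]
      have := hA.posSemidef.dotProduct_mulVec_nonneg (v ᵥ* B)
      simpa using this
    have hf' : ∀ s ∈ Set.Ici (0:ℝ), 0 ≤ τ⁻¹ * (q s - f s) + τ⁻¹ * f s := by
      intro s hs
      have h1 := hq s hs
      have h2 : 0 ≤ τ⁻¹ := (inv_pos.mpr hτ).le
      nlinarith
    have h0 := exp_mul_le_of_deriv hτ hf hf' ht
    have hbase : m ≤ f 0 := by
      have h1 := quadform_ge_inf_eigenvalues hk hM₀.isHermitian v
      have h2 : f 0 = v ⬝ᵥ M₀ *ᵥ v := by rw [hfdef]; simp [hM0]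
      rw [h2, ← hm] at *
      calc m = m * (v ⬝ᵥ v) := by rw [hv, mul_one]
        _ ≤ v ⬝ᵥ M₀ *ᵥ v := by rw [hm]; exact h1
    have he := Real.exp_pos (t / τ)
    rw [neg_div, Real.exp_neg, ← div_eq_mul_inv, div_le_iff₀ he]
    rw [mul_comm]
    exact hbase.trans h0
  intro t ht
  have hpd := (hsol t ht).1
  -- Part 2
  have part2 : ∀ (hH : (M t).IsHermitian) (i : Fin k),
      m * Real.exp (-t / τ) ≤ hH.eigenvalues i := by
    intro hH i
    set b : Fin k → ℝ := ⇑(hH.eigenvectorBasis i) with hb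
    have hbn : ‖hH.eigenvectorBasis i‖ = 1 := hH.eigenvectorBasis.orthonormal.1 i
    have hunit : b ⬝ᵥ b = 1 := by
      have h1 : (inner ℝ (hH.eigenvectorBasis i) (hH.eigenvectorBasis i) : ℝ) = 1 := by
        rw [real_inner_self_eq_norm_sq, hbn]; norm_num
      rw [← h1]
      simp [PiLp.inner_apply, RCLike.inner_apply, dotProduct, hb]
      rw [← h1]
      simp only [PiLp.inner_apply, RCLike.inner_apply, conj_trivial]
    have heig : hH.eigenvalues i = b ⬝ᵥ (M t) *ᵥ b := by
      have := hH.eigenvalues_eq i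
      simpa [hb] using this
    rw [heig]
    exact key t ht b hunit
  refine ⟨key t ht, part2, ?_⟩
  -- Part 3
  set c : ℝ := m * Real.exp (-t / τ) with hc
  have hcpos : 0 < c := mul_pos hm_pos (Real.exp_pos _)
  have hdot_nonneg : ∀ y : Fin k → ℝ, 0 ≤ y ⬝ᵥ y := fun y =>
    Finset.sum_nonneg fun i _ => mul_self_nonneg _
  have hquadall : ∀ y : Fin k → ℝ, c * (y ⬝ᵥ y) ≤ y ⬝ᵥ (M t) *ᵥ y := by
    intro y
    have h1 := quadform_ge_inf_eigenvalues hk hpd.isHermitian y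
    have h2 : c ≤ ⨅ i, hpd.isHermitian.eigenvalues i :=
      le_ciInf (fun i => part2 hpd.isHermitian i)
    have h3 := hdot_nonneg y
    nlinarith [mul_le_mul_of_nonneg_right h2 h3]
  set N : (Fin k → ℝ) → ℝ := fun y => Real.sqrt (y ⬝ᵥ y) with hN
  have hNsq : ∀ y, N y ^ 2 = y ⬝ᵥ y := fun y => Real.sq_sqrt (hdot_nonneg y)
  have hNnonneg : ∀ y, 0 ≤ N y := fun y => Real.sqrt_nonneg _
  have hCS : ∀ y z : Fin k → ℝ, y ⬝ᵥ z ≤ N y * N z := by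
    intro y z
    set y' : EuclideanSpace ℝ (Fin k) := (WithLp.equiv 2 (Fin k → ℝ)).symm y with hy'
    set z' : EuclideanSpace ℝ (Fin k) := (WithLp.equiv 2 (Fin k → ℝ)).symm z with hz'
    have h := real_inner_le_norm y' z'
    have hiy : (inner ℝ y' z' : ℝ) = y ⬝ᵥ z := by
      simp [PiLp.inner_apply, RCLike.inner_apply, dotProduct, hy', hz']
      exact Finset.sum_congr rfl fun i _ => mul_comm _ _
    have hny : ‖y'‖ = N y := by
      rw [EuclideanSpace.norm_eq]
      congr 1
      simp [dotProduct, Real.norm_eq_abs, sq_abs, pow_two, hy']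
    have hnz : ‖z'‖ = N z := by
      rw [EuclideanSpace.norm_eq]
      congr 1
      simp [dotProduct, Real.norm_eq_abs, sq_abs, pow_two, hz']
    rw [hiy, hny, hnz] at h
    exact h
  have hMy : ∀ y : Fin k → ℝ, c * N y ≤ N ((M t) *ᵥ y) := by
    intro y
    rcases eq_or_ne (N y) 0 with h0 | h0
    · rw [h0, mul_zero]; exact hNnonneg _
    · have hNypos : 0 < N y := lt_of_le_of_ne (hNnonneg y) (Ne.symm h0)
      have h1 := hquadall y
      have h2 := hCS y ((M t) *ᵥ y)
      nlinarith [hNsq y, hNnonneg ((M t) *ᵥ y)]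
  have hdet : IsUnit (M t).det := isUnit_iff_ne_zero.mpr (ne_of_gt hpd.det_pos)
  have hinv : ∀ x : Fin k → ℝ, N ((M t)⁻¹ *ᵥ x) ≤ c⁻¹ * N x := by
    intro x
    have hMx : (M t) *ᵥ ((M t)⁻¹ *ᵥ x) = x := by
      rw [Matrix.mulVec_mulVec, Matrix.mul_nonsing_inv _ hdet, Matrix.one_mulVec]
    have h := hMy ((M t)⁻¹ *ᵥ x)
    rw [hMx] at h
    rw [← mul_le_mul_iff_right₀ hcpos, ← mul_assoc, mul_inv_cancel₀ (ne_of_gt hcpos), one_mul]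
    exact h
  -- assemble the Frobenius norm bound
  have hRnonneg : 0 ≤ (Real.sqrt k / m) * Real.exp (t / τ) := by positivity
  rw [Matrix.frobenius_norm_def]
  have hrpow : (∑ i, ∑ j, ‖(M t)⁻¹ i j‖ ^ (2:ℝ)) ^ (1/2 : ℝ)
      = Real.sqrt (∑ i, ∑ j, ((M t)⁻¹ i j) ^ 2) := by
    rw [Real.sqrt_eq_rpow]
    congr 1
    apply Finset.sum_congr rfl
    intro i _
    apply Finset.sum_congr rfl
    intro j _
    rw [show ((2:ℝ)) = ((2:ℕ):ℝ) by norm_num, Real.rpow_natCast]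
    simp [Real.norm_eq_abs, sq_abs]
  rw [hrpow]
  rw [show (Real.sqrt k / m) * Real.exp (t / τ)
      = Real.sqrt (((Real.sqrt k / m) * Real.exp (t / τ)) ^ 2) from
    (Real.sqrt_sq hRnonneg).symm]
  apply Real.sqrt_le_sqrt
  have hcol : ∀ j : Fin k, (fun i => (M t)⁻¹ i j) = (M t)⁻¹ *ᵥ Pi.single j 1 := by
    intro j
    funext i
    simp [Matrix.mulVec_single]
  have hsingle : ∀ j : Fin k, N (Pi.single j 1) = 1 := by
    intro j
    rw [hN]
    simp [dotProduct_single]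
  have hcolbound : ∀ j : Fin k, (∑ i, ((M t)⁻¹ i j) ^ 2) ≤ (c⁻¹) ^ 2 := by
    intro j
    have h1 : (∑ i, ((M t)⁻¹ i j) ^ 2) = N ((M t)⁻¹ *ᵥ Pi.single j 1) ^ 2 := by
      rw [hNsq, ← hcol]
      simp [dotProduct, pow_two]
    rw [h1]
    have h2 := hinv (Pi.single j 1)
    rw [hsingle j, mul_one] at h2
    exact pow_le_pow_left₀ (hNnonneg _) h2 2
  calc (∑ i, ∑ j, ((M t)⁻¹ i j) ^ 2) = ∑ j, ∑ i, ((M t)⁻¹ i j) ^ 2 := Finset.sum_comm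
    _ ≤ ∑ _j : Fin k, (c⁻¹) ^ 2 := Finset.sum_le_sum fun j _ => hcolbound j
    _ = (k : ℝ) * (c⁻¹) ^ 2 := by simp [mul_comm]
    _ = ((Real.sqrt k / m) * Real.exp (t / τ)) ^ 2 := by
        rw [hc, neg_div, Real.exp_neg, mul_inv, inv_inv]
        have h1 : Real.sqrt k ^ 2 = (k : ℝ) := Real.sq_sqrt (Nat.cast_nonneg k)
        field_simp
        nlinarith [h1, Real.exp_pos (t / τ)]
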